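/- Let $R$ be a stopping time for a filtration $\mathbb{H}$ and suppose there is a subfiltration $\mathbb{G}$ in which $R$ is totally inaccessible with compensator $\int_0^t \lambda_s\,dc(s)$, where $c$ is deterministic, continuous, and nondecreasing. Let $F(t)=P(R\le t)$ be the law of $R$. Then $dF \ll dc$. In particular, if $c(s)=s$ then $F$ is absolutely continuous with respect to Lebesgue measure, and if $dc$ is singular with respect to Lebesgue measure then $F$ is singular. -/

import Mathlib

open MeasureTheory ProbabilityTheory Set Filter Function
open scoped ENNReal NNReal Topology

noncomputable section

variable {Ω : Type*}

/-- A family of sub-σ-algebras of `m` indexed by time, monotone: a filtration. -/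
def IsFiltrationFam [m : MeasurableSpace Ω] (G : ℝ → MeasurableSpace Ω) : Prop :=
  Monotone G ∧ ∀ t, G t ≤ m

/-- `R` (with values in `[0,∞]`) is a stopping time for the family `G`. -/
def IsStoppingTimeE [MeasurableSpace Ω] (G : ℝ → MeasurableSpace Ω) (R : Ω → ℝ≥0∞) : Prop :=
  ∀ t : ℝ, MeasurableSet[G t] {ω | R ω ≤ ENNReal.ofReal t}

/-- A real-valued process adapted to the family `G`. -/
def AdaptedFam [MeasurableSpace Ω] (G : ℝ → MeasurableSpace Ω) (X : ℝ → Ω → ℝ) : Prop :=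
  ∀ t, Measurable[G t] (X t)

/-- Martingale (on nonnegative times) for the family `G` under `P`. -/
def IsMartingaleFam [MeasurableSpace Ω] (P : Measure Ω) (G : ℝ → MeasurableSpace Ω)
    (X : ℝ → Ω → ℝ) : Prop :=
  AdaptedFam G X ∧ (∀ t, Integrable (X t) P) ∧
    ∀ s t : ℝ, 0 ≤ s → s ≤ t → P[X t | G s] =ᵐ[P] X s

/-- The one-jump indicator process `1_{t ≥ R}` of a random time `R`. -/
def stInd [MeasurableSpace Ω] (R : Ω → ℝ≥0∞) : ℝ → Ω → ℝ :=
  fun t => {ω | R ω ≤ ENNReal.ofReal t}.indicator (fun _ => (1 : ℝ))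

/-- A predictable (announceable) stopping time for the family `G`. -/
def IsPredictableST [MeasurableSpace Ω] (G : ℝ → MeasurableSpace Ω) (T : Ω → ℝ≥0∞) : Prop :=
  IsStoppingTimeE G T ∧ ∃ Tn : ℕ → Ω → ℝ≥0∞, (∀ n, IsStoppingTimeE G (Tn n)) ∧
    ∀ ω, Monotone (fun n => Tn n ω) ∧ Tendsto (fun n => Tn n ω) atTop (nhds (T ω)) ∧
      ∀ n, 0 < T ω → Tn n ω < T ω

/-- A totally inaccessible stopping time: it avoids every predictable stopping time. -/
def IsTotallyInaccessible [MeasurableSpace Ω] (P : Measure Ω) (G : ℝ → MeasurableSpace Ω)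
    (R : Ω → ℝ≥0∞) : Prop :=
  IsStoppingTimeE G R ∧ ∀ T, IsPredictableST G T → P {ω | R ω = T ω ∧ R ω < ⊤} = 0

/-- The stopping time `R` has an absolutely continuous compensator:
`1_{t ≥ R} - ∫_0^t λ_s ds` is a martingale for some nonnegative adapted `λ`. -/
def HasACCompensator [MeasurableSpace Ω] (P : Measure Ω) (G : ℝ → MeasurableSpace Ω)
    (R : Ω → ℝ≥0∞) : Prop :=
  ∃ lam : ℝ → Ω → ℝ, (∀ s ω, 0 ≤ lam s ω) ∧ AdaptedFam G lam ∧
    IsMartingaleFam P G (fun t ω => stInd R t ω - ∫ s in Ioc (0:ℝ) t, lam s ω)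

/-- dyadic point `l / 2^N` -/
def dyad (N l : ℕ) : ℝ := (l : ℝ) / 2 ^ N

lemma dyad_nonneg (N l : ℕ) : 0 ≤ dyad N l := by
  unfold dyad; positivity

lemma dyad_mono (N : ℕ) {l l' : ℕ} (h : l ≤ l') : dyad N l ≤ dyad N l' := by
  unfold dyad
  have : (l:ℝ) ≤ l' := by exact_mod_cast h
  gcongr

lemma dyad_lt (N : ℕ) {l l' : ℕ} (h : l < l') : dyad N l < dyad N l' := by
  unfold dyad
  have : (l:ℝ) < l' := by exact_mod_cast h
  gcongr

lemma dyad_double (N l : ℕ) : dyad (N + 1) (2 * l) = dyad N l := by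
  unfold dyad
  push_cast
  field_simp
  ring

lemma dyad_le_of_le {N l : ℕ} {b : ℕ} (h : l ≤ b * 2 ^ N) : dyad N l ≤ (b : ℝ) := by
  unfold dyad
  rw [div_le_iff₀ (by positivity)]
  calc (l : ℝ) ≤ ((b * 2 ^ N : ℕ) : ℝ) := by exact_mod_cast h
  _ = b * 2 ^ N := by push_cast; ring

/-- the dyadic cell `(l/2^N, (l+1)/2^N]` -/
def dcell (N l : ℕ) : Set ℝ := Ioc (dyad N l) (dyad N (l + 1))

lemma dcell_split (N l : ℕ) : dcell N l = dcell (N + 1) (2 * l) ∪ dcell (N + 1) (2 * l + 1) := by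
  unfold dcell
  rw [Set.Ioc_union_Ioc_eq_Ioc (dyad_mono _ (by omega)) (dyad_mono _ (by omega)), dyad_double]
  have : 2 * l + 1 + 1 = 2 * (l + 1) := by ring
  rw [this, dyad_double]

lemma dcell_disjoint (N : ℕ) {l l' : ℕ} (h : l ≠ l') : Disjoint (dcell N l) (dcell N l') := by
  unfold dcell
  rw [Set.Ioc_disjoint_Ioc]
  rcases Nat.lt_or_ge l l' with h1 | h1
  · exact le_trans (min_le_left _ _) (le_trans (dyad_mono N (by omega)) (le_max_right _ _))
  · exact le_trans (min_le_right _ _) (le_trans (dyad_mono N (by omega)) (le_max_left _ _))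

lemma dcell_subset_Ioc {N l b : ℕ} (h : l + 1 ≤ b * 2 ^ N) : dcell N l ⊆ Ioc (0:ℝ) b := by
  intro x hx
  exact ⟨lt_of_le_of_lt (dyad_nonneg N l) hx.1, le_trans hx.2 (dyad_le_of_le h)⟩

/-- coverage: any point of an open `U` inside `(0,b]` lies in a dyadic cell inside `U`. -/
lemma exists_dcell {U : Set ℝ} (hU : IsOpen U) {x : ℝ} {b : ℕ} (hx : x ∈ U)
    (h0 : 0 < x) (hxb : x ≤ b) :
    ∃ N l, l + 1 ≤ b * 2 ^ N ∧ x ∈ dcell N l ∧ dcell N l ⊆ U := by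
  obtain ⟨ε, hε, hball⟩ := Metric.isOpen_iff.1 hU x hx
  obtain ⟨N, hN⟩ := pow_unbounded_of_one_lt (ε⁻¹) (one_lt_two (α := ℝ))
  have h2N : (0:ℝ) < 2 ^ N := by positivity
  have hinv : (1:ℝ) / 2 ^ N < ε := by
    rw [div_lt_iff₀ h2N]
    rw [inv_lt_iff_one_lt_mul₀ hε] at hN
    nlinarith
  set z : ℝ := x * 2 ^ N with hz
  have hz0 : 0 < z := by positivity
  have hc1 : 1 ≤ ⌈z⌉₊ := Nat.one_le_iff_ne_zero.mpr (by positivity)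
  have hcb : (⌈z⌉₊ : ℕ) ≤ b * 2 ^ N := by
    have h1 : (⌈z⌉₊ : ℕ) ≤ ⌈(b:ℝ) * 2 ^ N⌉₊ := Nat.ceil_le_ceil (by nlinarith)
    have h2 : ⌈(b:ℝ) * 2 ^ N⌉₊ = b * 2 ^ N := by
      have : ((b * 2 ^ N : ℕ) : ℝ) = (b:ℝ) * 2 ^ N := by push_cast; ring
      rw [← this, Nat.ceil_natCast]
    omega
  have hlow : dyad N (⌈z⌉₊ - 1) < x := by
    unfold dyad
    rw [div_lt_iff₀ h2N]
    have h3 : (⌈z⌉₊ : ℝ) < z + 1 := Nat.ceil_lt_add_one (le_of_lt hz0)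
    have h4 : ((⌈z⌉₊ - 1 : ℕ) : ℝ) = (⌈z⌉₊ : ℝ) - 1 := by
      have : (1:ℕ) ≤ ⌈z⌉₊ := hc1
      push_cast [this]
      ring
    rw [h4, hz] at *
    linarith
  have hhigh : x ≤ dyad N (⌈z⌉₊ - 1 + 1) := by
    have h5 : ⌈z⌉₊ - 1 + 1 = ⌈z⌉₊ := by omega
    rw [h5]
    unfold dyad
    rw [le_div_iff₀ h2N]
    exact Nat.le_ceil z
  have hdiam : dyad N (⌈z⌉₊ - 1 + 1) - dyad N (⌈z⌉₊ - 1) = 1 / 2 ^ N := by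
    unfold dyad
    push_cast
    field_simp
    ring
  refine ⟨N, ⌈z⌉₊ - 1, by omega, ⟨hlow, hhigh⟩, ?_⟩
  intro y hy
  apply hball
  simp only [Metric.mem_ball, Real.dist_eq]
  rw [abs_lt]
  have hy1 := hy.1
  have hy2 := hy.2
  unfold dcell at *
  constructor <;> nlinarith [hlow, hhigh, hdiam]

-- PART 2
open Classical in
/-- indices of level-`N` dyadic cells inside `U` (and inside `(0,b]`). -/
def cellIdx (U : Set ℝ) (b N : ℕ) : Finset ℕ :=
  (Finset.range (b * 2 ^ N)).filter (fun l => dcell N l ⊆ U)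

lemma mem_cellIdx {U : Set ℝ} {b N l : ℕ} :
    l ∈ cellIdx U b N ↔ l + 1 ≤ b * 2 ^ N ∧ dcell N l ⊆ U := by
  classical
  simp only [cellIdx, Finset.mem_filter, Finset.mem_range]
  constructor
  · rintro ⟨h1, h2⟩; exact ⟨by omega, h2⟩
  · rintro ⟨h1, h2⟩; exact ⟨by omega, h2⟩

/-- union of the level-`N` dyadic cells inside `U ∩ (0,b]`. -/
def Wset (U : Set ℝ) (b N : ℕ) : Set ℝ := ⋃ l ∈ cellIdx U b N, dcell N l

lemma Wset_subset {U : Set ℝ} {b N : ℕ} : Wset U b N ⊆ U ∩ Ioc (0:ℝ) b := by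
  intro x hx
  simp only [Wset, mem_iUnion] at hx
  obtain ⟨l, hl, hxl⟩ := hx
  rw [mem_cellIdx] at hl
  exact ⟨hl.2 hxl, dcell_subset_Ioc hl.1 hxl⟩

lemma Wset_mono {U : Set ℝ} {b : ℕ} : Monotone (fun N => Wset U b N) := by
  apply monotone_nat_of_le_succ
  intro N x hx
  simp only [Wset, mem_iUnion] at hx ⊢
  obtain ⟨l, hl, hxl⟩ := hx
  rw [mem_cellIdx] at hl
  rw [dcell_split] at hxl
  rcases hxl with h | h
  · refine ⟨2 * l, ?_, h⟩
    rw [mem_cellIdx]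
    constructor
    · have := hl.1; ring_nf; omega
    · intro y hy
      apply hl.2
      rw [dcell_split]; exact Or.inl hy
  · refine ⟨2 * l + 1, ?_, h⟩
    rw [mem_cellIdx]
    constructor
    · have := hl.1; ring_nf; omega
    · intro y hy
      apply hl.2
      rw [dcell_split]; exact Or.inr hy

lemma iUnion_Wset {U : Set ℝ} (hU : IsOpen U) (b : ℕ) :
    (⋃ N, Wset U b N) = U ∩ Ioc (0:ℝ) b := by
  apply Set.Subset.antisymm
  · exact iUnion_subset fun N => Wset_subset
  · rintro x ⟨hxU, hx0, hxb⟩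
    obtain ⟨N, l, h1, h2, h3⟩ := exists_dcell hU hxU hx0 hxb
    exact mem_iUnion.2 ⟨N, mem_iUnion.2 ⟨l, mem_iUnion.2 ⟨mem_cellIdx.2 ⟨h1, h3⟩, h2⟩⟩⟩

lemma Wset_measurable {U : Set ℝ} {b N : ℕ} : MeasurableSet (Wset U b N) :=
  (cellIdx U b N).measurableSet_biUnion (fun _ _ => measurableSet_Ioc)

-- PART 3 : basic facts
/-- cumulative intensity -/
def gI [MeasurableSpace Ω] (c : StieltjesFunction ℝ) (lam : ℝ → Ω → ℝ) : ℝ → Ω → ℝ :=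
  fun t ω => ∫ s in Ioc (0:ℝ) t, lam s ω ∂c.measure

/-- bundled context -/
structure MCtx [m : MeasurableSpace Ω] (P : Measure Ω) (G : ℝ → MeasurableSpace Ω)
    (R : Ω → ℝ≥0∞) (c : StieltjesFunction ℝ) (lam : ℝ → Ω → ℝ) : Prop where
  hG : IsFiltrationFam G
  hRmeas : Measurable R
  hRG : IsStoppingTimeE G R
  hlam0 : ∀ s ω, 0 ≤ lam s ω
  hmart : IsMartingaleFam P G (fun t ω => stInd R t ω - gI c lam t ω)

namespace MCtx

variable [m : MeasurableSpace Ω] {P : Measure Ω} [IsProbabilityMeasure P]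
  {G : ℝ → MeasurableSpace Ω} {R : Ω → ℝ≥0∞} {c : StieltjesFunction ℝ} {lam : ℝ → Ω → ℝ}
  (h : MCtx P G R c lam)

lemma stInd_nonneg (t : ℝ) (ω : Ω) : 0 ≤ stInd R t ω := by
  unfold stInd; exact Set.indicator_nonneg (fun _ _ => zero_le_one) ω

lemma stInd_le_one (t : ℝ) (ω : Ω) : stInd R t ω ≤ 1 := by
  unfold stInd
  exact Set.indicator_le' (fun _ _ => le_refl 1) (fun _ _ => zero_le_one) ω

lemma stInd_mono {s t : ℝ} (hst : s ≤ t) (ω : Ω) : stInd R s ω ≤ stInd R t ω := by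
  unfold stInd
  by_cases hω : R ω ≤ ENNReal.ofReal s
  · have hω' : R ω ≤ ENNReal.ofReal t := le_trans hω (ENNReal.ofReal_le_ofReal hst)
    rw [Set.indicator_of_mem (show ω ∈ {ω | R ω ≤ ENNReal.ofReal s} from hω),
      Set.indicator_of_mem (show ω ∈ {ω | R ω ≤ ENNReal.ofReal t} from hω')]
  · rw [Set.indicator_of_notMem (show ω ∉ {ω | R ω ≤ ENNReal.ofReal s} from hω)]
    exact Set.indicator_nonneg (fun _ _ => zero_le_one) ω

include h

lemma stInd_measG (t : ℝ) : Measurable[G t] (stInd R t) :=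
  (measurable_const (α := ℝ)).indicator (h.hRG t)

lemma stInd_meas (t : ℝ) : Measurable (stInd R t) :=
  (stInd_measG h t).mono (h.hG.2 t) le_rfl

lemma stInd_int (t : ℝ) : Integrable (stInd R t) P :=
  (integrable_const (1:ℝ)).indicator (h.hG.2 t _ (h.hRG t))

lemma X_int (t : ℝ) : Integrable (fun ω => stInd R t ω - gI c lam t ω) P := h.hmart.2.1 t

lemma gI_int (t : ℝ) : Integrable (gI c lam t) P := by
  have h2 := (stInd_int h t).sub (X_int h t)
  have : gI c lam t = fun ω => stInd R t ω - (stInd R t ω - gI c lam t ω) := by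
    funext ω; ring
  rw [this]
  exact h2

lemma gI_measG (t : ℝ) : Measurable[G t] (gI c lam t) := by
  have : gI c lam t = fun ω => stInd R t ω - (stInd R t ω - gI c lam t ω) := by
    funext ω; ring
  rw [this]
  exact (stInd_measG h t).sub (h.hmart.1 t)

lemma gI_meas (t : ℝ) : Measurable (gI c lam t) := (gI_measG h t).mono (h.hG.2 t) le_rfl

omit h

lemma gI_nonneg (t : ℝ) (ω : Ω) (hlam0 : ∀ s ω, 0 ≤ lam s ω) : 0 ≤ gI c lam t ω :=
  integral_nonneg (fun s => hlam0 s ω)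

/-- pointwise additivity on the honest region -/
lemma gI_sub {t s : ℝ} {ω : Ω} (hs : 0 ≤ s) (hst : s ≤ t)
    (hInt : IntegrableOn (fun u => lam u ω) (Ioc 0 t) c.measure) :
    gI c lam t ω - gI c lam s ω = ∫ u in Ioc s t, lam u ω ∂c.measure := by
  unfold gI
  rw [← Set.Ioc_union_Ioc_eq_Ioc hs hst,
    setIntegral_union (Set.Ioc_disjoint_Ioc_of_le le_rfl) measurableSet_Ioc
      (hInt.mono_set (by rw [← Set.Ioc_union_Ioc_eq_Ioc hs hst]; exact Set.subset_union_left))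
      (hInt.mono_set (by rw [← Set.Ioc_union_Ioc_eq_Ioc hs hst]; exact Set.subset_union_right))]
  ring

lemma gI_junk {t : ℝ} {ω : Ω} (hInt : ¬ IntegrableOn (fun u => lam u ω) (Ioc 0 t) c.measure) :
    gI c lam t ω = 0 := integral_undef hInt

include h

/-- martingale transfer identity -/
lemma key {s t : ℝ} (hs : 0 ≤ s) (hst : s ≤ t) {A : Set Ω} (hA : MeasurableSet[G s] A) :
    ∫ ω in A, gI c lam t ω ∂P - ∫ ω in A, gI c lam s ω ∂P
      = ∫ ω in A, stInd R t ω ∂P - ∫ ω in A, stInd R s ω ∂P := by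
  have hAm : MeasurableSet A := h.hG.2 s A hA
  have h1 : ∫ ω in A, (stInd R t ω - gI c lam t ω) ∂P
      = ∫ ω in A, (stInd R s ω - gI c lam s ω) ∂P := by
    rw [← setIntegral_condExp (h.hG.2 s) (h.hmart.2.1 t) hA]
    exact setIntegral_congr_ae hAm ((h.hmart.2.2 s t hs hst).mono (fun ω hω _ => hω))
  rw [integral_sub ((stInd_int h t).integrableOn) ((gI_int h t).integrableOn),
    integral_sub ((stInd_int h s).integrableOn) ((gI_int h s).integrableOn)] at h1
  linarith

/-- expectation of g is monotone on events from the past -/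
lemma keyMono {s t : ℝ} (hs : 0 ≤ s) (hst : s ≤ t) {A : Set Ω} (hA : MeasurableSet[G s] A) :
    ∫ ω in A, gI c lam s ω ∂P ≤ ∫ ω in A, gI c lam t ω ∂P := by
  have h1 := key h hs hst hA
  have h2 : ∫ ω in A, stInd R s ω ∂P ≤ ∫ ω in A, stInd R t ω ∂P :=
    setIntegral_mono_on ((stInd_int h s).integrableOn) ((stInd_int h t).integrableOn)
      (h.hG.2 s A hA) (fun ω _ => stInd_mono hst ω)
  linarith

end MCtx


namespace MCtx
variable [m : MeasurableSpace Ω] {P : Measure Ω} [IsProbabilityMeasure P]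
  {G : ℝ → MeasurableSpace Ω} {R : Ω → ℝ≥0∞} {c : StieltjesFunction ℝ} {lam : ℝ → Ω → ℝ}
-- PART 4
/-- enumeration of dyadic points in `[0,b]` -/
def qseq (b : ℕ) (i : ℕ) : ℝ := min (b:ℝ) (dyad (Nat.unpair i).2 (Nat.unpair i).1)

lemma qseq_nonneg (b i : ℕ) : 0 ≤ qseq b i :=
  le_min (Nat.cast_nonneg b) (dyad_nonneg _ _)

lemma qseq_le (b i : ℕ) : qseq b i ≤ (b:ℝ) := min_le_left _ _

lemma qseq_eq_dyad {b N l : ℕ} (hl : l ≤ b * 2 ^ N) : qseq b (Nat.pair l N) = dyad N l := by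
  unfold qseq
  rw [Nat.unpair_pair]
  exact min_eq_right (dyad_le_of_le hl)

/-- the event that `g` ever exceeds `M` at a dyadic time in `[0,b]` -/
def badSet [MeasurableSpace Ω] (c : StieltjesFunction ℝ) (lam : ℝ → Ω → ℝ) (b : ℕ) (M : ℝ) :
    Set Ω := ⋃ i, {ω | M < gI c lam (qseq b i) ω}

/-- the event that `g` stayed `≤ M` at all dyadic times `≤ t` -/
def Hset [MeasurableSpace Ω] (c : StieltjesFunction ℝ) (lam : ℝ → Ω → ℝ) (b : ℕ) (M t : ℝ) :
    Set Ω := ⋂ i, ⋂ (_ : qseq b i ≤ t), {ω | gI c lam (qseq b i) ω ≤ M}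

variable (h : MCtx P G R c lam)
include h

lemma Hset_measG {b : ℕ} {M t : ℝ} (ht : 0 ≤ t) : MeasurableSet[G t] (Hset c lam b M t) := by
  refine MeasurableSet.iInter (fun i => MeasurableSet.iInter (fun hi => ?_))
  exact h.hG.1 hi _ ((gI_measG h (qseq b i)) measurableSet_Iic)

lemma Hset_meas {b : ℕ} {M t : ℝ} : MeasurableSet (Hset c lam b M t) := by
  refine MeasurableSet.iInter (fun i => MeasurableSet.iInter (fun hi => ?_))
  exact h.hG.2 _ _ ((gI_measG h (qseq b i)) measurableSet_Iic)

lemma badSet_meas {b : ℕ} {M : ℝ} : MeasurableSet (badSet c lam b M) :=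
  MeasurableSet.iUnion (fun i => h.hG.2 _ _ ((gI_measG h (qseq b i)) measurableSet_Ioi))

omit h

lemma Hset_anti {b : ℕ} {M s t : ℝ} (hst : s ≤ t) : Hset c lam b M t ⊆ Hset c lam b M s := by
  intro ω hω
  simp only [Hset, mem_iInter] at hω ⊢
  exact fun i hi => hω i (le_trans hi hst)

lemma Hset_b_compl {b : ℕ} {M : ℝ} : (Hset c lam b M b)ᶜ = badSet c lam b M := by
  ext ω
  simp only [Hset, badSet, compl_iInter, mem_iUnion, mem_compl_iff, mem_iInter, mem_setOf_eq,
    not_le, not_forall]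
  constructor
  · rintro ⟨i, _, hlt⟩; exact ⟨i, hlt⟩
  · rintro ⟨i, hlt⟩; exact ⟨i, qseq_le b i, hlt⟩

lemma badSet_anti {b : ℕ} {M M' : ℝ} (hMM : M ≤ M') : badSet c lam b M' ⊆ badSet c lam b M := by
  intro ω hω
  simp only [badSet, mem_iUnion, mem_setOf_eq] at hω ⊢
  obtain ⟨i, hi⟩ := hω
  exact ⟨i, lt_of_le_of_lt hMM hi⟩

include h

/-- finite Doob-type maximal inequality -/
lemma doob_fin (b : ℕ) {M : ℝ} (hM : 1 < M) (n : ℕ) :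
    P (⋃ i ∈ Finset.range n, {ω | M < gI c lam (qseq b i) ω})
      ≤ ENNReal.ofReal ((∫ ω, |stInd R b ω - gI c lam b ω| ∂P) / (M - 1)) := by
  classical
  set C : ℝ := ∫ ω, |stInd R b ω - gI c lam b ω| ∂P with hC
  have hC0 : 0 ≤ C := integral_nonneg (fun ω => abs_nonneg _)
  set F : Finset ℝ := (Finset.range n).image (qseq b) with hF
  have hF0 : ∀ t ∈ F, 0 ≤ t ∧ t ≤ (b:ℝ) := by
    intro t ht
    rw [hF, Finset.mem_image] at ht
    obtain ⟨i, _, rfl⟩ := ht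
    exact ⟨qseq_nonneg b i, qseq_le b i⟩
  set A : ℝ → Set Ω := fun t => {ω | M < gI c lam t ω} ∩
    ⋂ t' ∈ F.filter (· < t), {ω | gI c lam t' ω ≤ M} with hA
  have hAmeasG : ∀ t ∈ F, MeasurableSet[G t] (A t) := by
    intro t ht
    refine MeasurableSet.inter ((gI_measG h t) measurableSet_Ioi) ?_
    refine Finset.measurableSet_biInter _ (fun t' ht' => ?_)
    rw [Finset.mem_filter] at ht'
    exact h.hG.1 (le_of_lt ht'.2) _ ((gI_measG h t') measurableSet_Iic)
  have hAmeas : ∀ t ∈ F, MeasurableSet (A t) := fun t ht => h.hG.2 t _ (hAmeasG t ht)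
  have hcover : (⋃ i ∈ Finset.range n, {ω | M < gI c lam (qseq b i) ω}) ⊆ ⋃ t ∈ F, A t := by
    intro ω hω
    simp only [mem_iUnion, mem_setOf_eq] at hω
    obtain ⟨i, hi, hgi⟩ := hω
    have hFne : (F.filter (fun t => M < gI c lam t ω)).Nonempty := by
      refine ⟨qseq b i, ?_⟩
      rw [Finset.mem_filter]
      exact ⟨Finset.mem_image_of_mem _ hi, hgi⟩
    set t₀ := (F.filter (fun t => M < gI c lam t ω)).min' hFne with ht₀
    have ht₀mem := (F.filter (fun t => M < gI c lam t ω)).min'_mem hFne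
    rw [Finset.mem_filter] at ht₀mem
    refine mem_iUnion.2 ⟨t₀, mem_iUnion.2 ⟨ht₀mem.1, ht₀mem.2, ?_⟩⟩
    simp only [mem_iInter, Finset.mem_filter]
    rintro t' ⟨ht'F, ht'lt⟩
    by_contra hcon
    rw [mem_setOf_eq, not_le] at hcon
    have : t₀ ≤ t' := Finset.min'_le (F.filter (fun t => M < gI c lam t ω)) t'
      (Finset.mem_filter.2 ⟨ht'F, hcon⟩)
    exact absurd ht'lt (not_lt.2 this)
  have hdisj : (F : Set ℝ).PairwiseDisjoint A := by
    intro t ht t' ht' htt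
    rw [Finset.mem_coe] at ht ht'
    rcases lt_or_gt_of_ne htt with hlt | hlt
    · refine Set.disjoint_left.2 (fun ω hω hω' => ?_)
      have h1 : gI c lam t ω ≤ M := by
        have h2 := hω'.2
        simp only [mem_iInter, Finset.mem_filter] at h2
        exact h2 t ⟨ht, hlt⟩
      exact absurd hω.1 (not_lt.2 h1)
    · refine Set.disjoint_left.2 (fun ω hω hω' => ?_)
      have h1 : gI c lam t' ω ≤ M := by
        have h2 := hω.2
        simp only [mem_iInter, Finset.mem_filter] at h2
        exact h2 t' ⟨ht', hlt⟩
      exact absurd hω'.1 (not_lt.2 h1)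
  have hbound : ∀ t ∈ F, (M - 1) * (P (A t)).toReal ≤ ∫ ω in A t, |stInd R b ω - gI c lam b ω| ∂P := by
    intro t ht
    have hXb_int : Integrable (fun ω => stInd R b ω - gI c lam b ω) P :=
      (stInd_int h b).sub (gI_int h b)
    have h1 : (M - 1) * (P (A t)).toReal = ∫ _ω in A t, (M - 1) ∂P := by
      rw [setIntegral_const]; simp [mul_comm, Measure.real]
    rw [h1]
    have h2 : ∫ ω in A t, (M - 1) ∂P ≤ ∫ ω in A t, (gI c lam t ω - stInd R t ω) ∂P := by
      refine setIntegral_mono_on (integrableOn_const)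
        (((gI_int h t).sub (stInd_int h t)).integrableOn) (hAmeas t ht) ?_
      intro ω hω
      have := hω.1
      rw [mem_setOf_eq] at this
      have h3 := stInd_le_one (R := R) t ω
      linarith
    have h4 : ∫ ω in A t, (gI c lam t ω - stInd R t ω) ∂P
        ≤ ∫ ω in A t, (gI c lam b ω - stInd R b ω) ∂P := by
      have hkey := key h (hF0 t ht).1 (hF0 t ht).2 (hAmeasG t ht)
      have e1 : ∫ ω in A t, (gI c lam t ω - stInd R t ω) ∂P
          = ∫ ω in A t, gI c lam t ω ∂P - ∫ ω in A t, stInd R t ω ∂P :=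
        integral_sub ((gI_int h t).integrableOn) ((stInd_int h t).integrableOn)
      have e2 : ∫ ω in A t, (gI c lam b ω - stInd R b ω) ∂P
          = ∫ ω in A t, gI c lam b ω ∂P - ∫ ω in A t, stInd R b ω ∂P :=
        integral_sub ((gI_int h b).integrableOn) ((stInd_int h b).integrableOn)
      rw [e1, e2]
      linarith
    have h5 : ∫ ω in A t, (gI c lam b ω - stInd R b ω) ∂P
        ≤ ∫ ω in A t, |stInd R b ω - gI c lam b ω| ∂P := by
      refine setIntegral_mono_on (((gI_int h b).sub (stInd_int h b)).integrableOn)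
        (hXb_int.abs.integrableOn) (hAmeas t ht) ?_
      intro ω _
      rw [abs_sub_comm]
      exact le_abs_self _
    linarith
  -- sum up
  have hXb_int : Integrable (fun ω => stInd R b ω - gI c lam b ω) P :=
    (stInd_int h b).sub (gI_int h b)
  have hsum : (M - 1) * (P (⋃ t ∈ F, A t)).toReal ≤ C := by
    have e1 : P (⋃ t ∈ F, A t) = ∑ t ∈ F, P (A t) :=
      measure_biUnion_finset hdisj (fun t ht => hAmeas t ht)
    have e2 : (P (⋃ t ∈ F, A t)).toReal = ∑ t ∈ F, (P (A t)).toReal := by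
      rw [e1, ENNReal.toReal_sum (fun t _ => measure_ne_top _ _)]
    rw [e2, Finset.mul_sum]
    have e3 : ∑ t ∈ F, (M - 1) * (P (A t)).toReal
        ≤ ∑ t ∈ F, ∫ ω in A t, |stInd R b ω - gI c lam b ω| ∂P :=
      Finset.sum_le_sum (fun t ht => hbound t ht)
    have e4 : ∑ t ∈ F, ∫ ω in A t, |stInd R b ω - gI c lam b ω| ∂P
        = ∫ ω in ⋃ t ∈ F, A t, |stInd R b ω - gI c lam b ω| ∂P :=
      (integral_biUnion_finset F (fun t ht => hAmeas t ht) hdisj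
        (fun t _ => hXb_int.abs.integrableOn)).symm
    have e5 : ∫ ω in ⋃ t ∈ F, A t, |stInd R b ω - gI c lam b ω| ∂P ≤ C :=
      setIntegral_le_integral hXb_int.abs (Filter.Eventually.of_forall (fun ω => abs_nonneg _))
    linarith
  have hmono : P (⋃ i ∈ Finset.range n, {ω | M < gI c lam (qseq b i) ω}) ≤ P (⋃ t ∈ F, A t) :=
    measure_mono hcover
  have hfin : P (⋃ t ∈ F, A t) ≠ ⊤ := measure_ne_top _ _
  refine le_trans hmono ?_
  rw [ENNReal.le_ofReal_iff_toReal_le hfin (div_nonneg hC0 (by linarith))]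
  rw [le_div_iff₀ (by linarith)]
  linarith [hsum]

/-- Doob maximal inequality over all dyadic times -/
lemma doob (b : ℕ) {M : ℝ} (hM : 1 < M) :
    P (badSet c lam b M)
      ≤ ENNReal.ofReal ((∫ ω, |stInd R b ω - gI c lam b ω| ∂P) / (M - 1)) := by
  have hmon : Monotone (fun n => ⋃ i ∈ Finset.range n, {ω | M < gI c lam (qseq b i) ω}) := by
    intro n n' hnn
    exact Set.biUnion_subset_biUnion_left (fun i hi =>
      Finset.mem_range.2 (lt_of_lt_of_le (Finset.mem_range.1 hi) hnn))
  have hU : (⋃ n, ⋃ i ∈ Finset.range n, {ω | M < gI c lam (qseq b i) ω}) = badSet c lam b M := by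
    ext ω
    simp only [badSet, mem_iUnion, Finset.mem_range, mem_setOf_eq]
    constructor
    · rintro ⟨n, i, _, hi⟩; exact ⟨i, hi⟩
    · rintro ⟨i, hi⟩; exact ⟨i + 1, i, Nat.lt_succ_self i, hi⟩
  have htend := tendsto_measure_iUnion_atTop (μ := P) hmon
  rw [hU] at htend
  exact le_of_tendsto' htend (fun n => doob_fin h b hM n)

/-- the event of unbounded dyadic `g` is null -/
lemma badSet_inter_null (b : ℕ) : P (⋂ k : ℕ, badSet c lam b ((k:ℝ) + 2)) = 0 := by
  set C : ℝ := ∫ ω, |stInd R b ω - gI c lam b ω| ∂P with hC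
  have hub : ∀ k : ℕ, P (⋂ k : ℕ, badSet c lam b ((k:ℝ) + 2))
      ≤ ENNReal.ofReal (C / ((k:ℝ) + 1)) := by
    intro k
    refine le_trans (measure_mono (Set.iInter_subset _ k)) ?_
    have hd := doob h b (M := (k:ℝ) + 2) (by
      have : (0:ℝ) ≤ (k:ℝ) := Nat.cast_nonneg k
      linarith)
    have he : ((k:ℝ) + 2 - 1) = (k:ℝ) + 1 := by ring
    rw [he] at hd
    exact hd
  have htend : Tendsto (fun k : ℕ => ENNReal.ofReal (C / ((k:ℝ) + 1))) atTop (𝓝 0) := by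
    rw [← ENNReal.ofReal_zero]
    refine ENNReal.tendsto_ofReal ?_
    have h1 : Tendsto (fun n : ℕ => C / (n:ℝ)) atTop (𝓝 0) := tendsto_const_div_atTop_nhds_zero_nat C
    have h2 := h1.comp (tendsto_add_atTop_nat 1)
    refine h2.congr (fun k => ?_)
    simp only [Function.comp_apply]
    push_cast
    ring_nf
  exact le_antisymm (ge_of_tendsto' htend hub) (zero_le)

end MCtx

namespace MCtx
variable [m : MeasurableSpace Ω] {P : Measure Ω} [IsProbabilityMeasure P]
  {G : ℝ → MeasurableSpace Ω} {R : Ω → ℝ≥0∞} {c : StieltjesFunction ℝ} {lam : ℝ → Ω → ℝ}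
-- PART 5
/-- the stopped lower-approximation sum -/
def Ysum [MeasurableSpace Ω] (c : StieltjesFunction ℝ) (lam : ℝ → Ω → ℝ) (U : Set ℝ)
    (b N : ℕ) (M : ℝ) : Ω → ℝ :=
  fun ω => ∑ l ∈ cellIdx U b N, (Hset c lam b M (dyad N (l + 1))).indicator
    (fun ω' => gI c lam (dyad N (l + 1)) ω' - gI c lam (dyad N l) ω') ω

lemma Ysum_int (h : MCtx P G R c lam) (U : Set ℝ) (b N : ℕ) (M : ℝ) :
    Integrable (Ysum c lam U b N M) P := by
  refine integrable_finset_sum _ (fun l _ => ?_)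
  exact (((gI_int h (dyad N (l+1))).sub (gI_int h (dyad N l))).indicator (Hset_meas h))

/-- pointwise structure of `Ysum`: either nonpositive, or bounded by an honest integral
over a finite union of cells below a controlled honest dyadic time. -/
lemma Ysum_struct (h : MCtx P G R c lam) (U : Set ℝ) (b N : ℕ) {M : ℝ} (ω : Ω) :
    Ysum c lam U b N M ω ≤ 0 ∨
    ∃ (e : ℝ) (V' : Set ℝ), MeasurableSet V' ∧ V' ⊆ U ∧ V' ⊆ Ioc 0 e ∧ 0 ≤ e ∧
      (∃ i, qseq b i = e) ∧ ω ∈ Hset c lam b M e ∧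
      IntegrableOn (fun u => lam u ω) (Ioc 0 e) c.measure ∧
      Ysum c lam U b N M ω ≤ ∫ u in V', lam u ω ∂c.measure := by
  classical
  set Λ := cellIdx U b N with hΛ
  set pred : ℕ → Prop := fun l => ω ∈ Hset c lam b M (dyad N (l + 1)) ∧
    IntegrableOn (fun u => lam u ω) (Ioc 0 (dyad N (l + 1))) c.measure with hpred
  set T := Λ.filter pred with hT
  have hsum1 : Ysum c lam U b N M ω
      ≤ ∑ l ∈ T, (gI c lam (dyad N (l + 1)) ω - gI c lam (dyad N l) ω) := by
    unfold Ysum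
    rw [← Finset.sum_filter_add_sum_filter_not Λ pred]
    have h2 : ∑ l ∈ Λ.filter (fun l => ¬ pred l), (Hset c lam b M (dyad N (l + 1))).indicator
        (fun ω' => gI c lam (dyad N (l + 1)) ω' - gI c lam (dyad N l) ω') ω ≤ 0 := by
      refine Finset.sum_nonpos (fun l hl => ?_)
      rw [Finset.mem_filter, hpred] at hl
      by_cases hH : ω ∈ Hset c lam b M (dyad N (l + 1))
      · have hnint : ¬ IntegrableOn (fun u => lam u ω) (Ioc 0 (dyad N (l + 1))) c.measure :=
          fun hint => hl.2 ⟨hH, hint⟩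
        rw [Set.indicator_of_mem hH]
        rw [gI_junk hnint]
        simp only [zero_sub, neg_nonpos]
        exact gI_nonneg _ _ h.hlam0
      · rw [Set.indicator_of_notMem hH]
    have h3 : ∑ l ∈ T, (Hset c lam b M (dyad N (l + 1))).indicator
        (fun ω' => gI c lam (dyad N (l + 1)) ω' - gI c lam (dyad N l) ω') ω
        = ∑ l ∈ T, (gI c lam (dyad N (l + 1)) ω - gI c lam (dyad N l) ω) := by
      refine Finset.sum_congr rfl (fun l hl => ?_)
      rw [hT, Finset.mem_filter] at hl
      exact Set.indicator_of_mem hl.2.1 _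
    rw [h3] at *
    linarith
  by_cases hTne : T.Nonempty
  · right
    set lmax := T.max' hTne with hlmax
    have hlmaxT : lmax ∈ T := T.max'_mem hTne
    rw [hT, Finset.mem_filter] at hlmaxT
    have hlmaxΛ : lmax ∈ Λ := hlmaxT.1
    have hpredmax := hlmaxT.2
    rw [hΛ, mem_cellIdx] at hlmaxΛ
    set e := dyad N (lmax + 1) with he
    set V' : Set ℝ := ⋃ l ∈ T, dcell N l with hV'
    have hVmeas : MeasurableSet V' := T.measurableSet_biUnion (fun _ _ => measurableSet_Ioc)
    have hVU : V' ⊆ U := by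
      refine Set.iUnion₂_subset (fun l hl => ?_)
      have : l ∈ Λ := (Finset.mem_filter.1 hl).1
      rw [hΛ, mem_cellIdx] at this
      exact this.2
    have hVIoc : V' ⊆ Ioc 0 e := by
      refine Set.iUnion₂_subset (fun l hl x hx => ?_)
      refine ⟨lt_of_le_of_lt (dyad_nonneg N l) hx.1, le_trans hx.2 ?_⟩
      exact dyad_mono N (by
        have : l ≤ lmax := T.le_max' l hl
        omega)
    refine ⟨e, V', hVmeas, hVU, hVIoc, dyad_nonneg _ _,
      ⟨Nat.pair (lmax + 1) N, qseq_eq_dyad hlmaxΛ.1⟩, hpredmax.1, hpredmax.2, ?_⟩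
    have hval : ∀ l ∈ T, gI c lam (dyad N (l + 1)) ω - gI c lam (dyad N l) ω
        = ∫ u in dcell N l, lam u ω ∂c.measure := by
      intro l hl
      have hp := (Finset.mem_filter.1 hl).2
      exact gI_sub (dyad_nonneg N l) (dyad_mono N (Nat.le_succ l)) hp.2
    have hintcell : ∀ l ∈ T, IntegrableOn (fun u => lam u ω) (dcell N l) c.measure := by
      intro l hl
      have hp := (Finset.mem_filter.1 hl).2
      refine hp.2.mono_set (fun x hx => ?_)
      exact ⟨lt_of_le_of_lt (dyad_nonneg N l) hx.1, hx.2⟩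
    have hsum2 : ∑ l ∈ T, (gI c lam (dyad N (l + 1)) ω - gI c lam (dyad N l) ω)
        = ∫ u in V', lam u ω ∂c.measure := by
      rw [Finset.sum_congr rfl hval, hV']
      exact (integral_biUnion_finset T (fun _ _ => measurableSet_Ioc)
        (fun l _ l' _ hll => dcell_disjoint N hll) hintcell).symm
    linarith
  · left
    rw [Finset.not_nonempty_iff_eq_empty] at hTne
    rw [hTne, Finset.sum_empty] at hsum1
    exact hsum1

/-- `Ysum ≤ M` pointwise -/
lemma Ysum_le (h : MCtx P G R c lam) (U : Set ℝ) (b N : ℕ) {M : ℝ} (hM : 0 ≤ M) (ω : Ω) :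
    Ysum c lam U b N M ω ≤ M := by
  rcases Ysum_struct h U b N (M := M) ω with h1 | ⟨e, V', _, _, hVIoc, he0, ⟨i, hqi⟩, hH, hInt, hle⟩
  · linarith
  · have h2 : ∫ u in V', lam u ω ∂c.measure ≤ ∫ u in Ioc 0 e, lam u ω ∂c.measure := by
      refine setIntegral_mono_set hInt ?_ (Filter.Eventually.of_forall hVIoc)
      exact Filter.Eventually.of_forall (fun u => h.hlam0 u ω)
    have h3 : ∫ u in Ioc 0 e, lam u ω ∂c.measure = gI c lam e ω := rfl
    have h4 : gI c lam e ω ≤ M := by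
      have := Set.mem_iInter.1 hH i
      rw [hqi] at this
      exact Set.mem_iInter.1 this (le_refl e)
    linarith

/-- tail bound for `Ysum` given a near-maximal honest time `q̄` -/
lemma Ysum_tail (h : MCtx P G R c lam) (U : Set ℝ) (hU : MeasurableSet U) (b N : ℕ)
    {M q ε : ℝ} (hε : 0 ≤ ε) (hq0 : 0 ≤ q) (ω : Ω)
    (hqInt : IntegrableOn (fun u => lam u ω) (Ioc 0 q) c.measure)
    (hcap : ∀ t, (∃ i, qseq b i = t) →
      IntegrableOn (fun u => lam u ω) (Ioc 0 t) c.measure → gI c lam t ω ≤ gI c lam q ω + ε) :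
    Ysum c lam U b N M ω ≤ (∫ u in U ∩ Ioc 0 q, lam u ω ∂c.measure) + ε := by
  have hbase : 0 ≤ ∫ u in U ∩ Ioc 0 q, lam u ω ∂c.measure :=
    integral_nonneg (fun u => h.hlam0 u ω)
  have hUqInt : IntegrableOn (fun u => lam u ω) (U ∩ Ioc 0 q) c.measure :=
    hqInt.mono_set Set.inter_subset_right
  rcases Ysum_struct h U b N (M := M) ω with
    h1 | ⟨e, V', hVmeas, hVU, hVIoc, he0, hei, hH, hInt, hle⟩
  · linarith
  · rcases le_or_gt e q with heq | hqe
    · have h2 : ∫ u in V', lam u ω ∂c.measure ≤ ∫ u in U ∩ Ioc 0 q, lam u ω ∂c.measure := by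
        refine setIntegral_mono_set hUqInt
          (Filter.Eventually.of_forall (fun u => h.hlam0 u ω))
          (Filter.Eventually.of_forall (fun x hx => ?_))
        exact ⟨hVU hx, (hVIoc hx).1, le_trans (hVIoc hx).2 heq⟩
      linarith
    · -- q < e : split V' at q
      have hsplit : V' = (V' ∩ Iic q) ∪ (V' \ Iic q) := by
        rw [Set.inter_union_diff]
      have hIntV1 : IntegrableOn (fun u => lam u ω) (V' ∩ Iic q) c.measure :=
        hInt.mono_set (fun x hx => ⟨(hVIoc hx.1).1, le_trans (hVIoc hx.1).2 (le_refl e)⟩)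
      have hIntV2 : IntegrableOn (fun u => lam u ω) (V' \ Iic q) c.measure :=
        hInt.mono_set (fun x hx => hVIoc hx.1)
      have hdisj : Disjoint (V' ∩ Iic q) (V' \ Iic q) := by
        refine Set.disjoint_left.2 (fun x hx hx' => hx'.2 hx.2)
      have heq1 : ∫ u in V', lam u ω ∂c.measure
          = (∫ u in V' ∩ Iic q, lam u ω ∂c.measure) + ∫ u in V' \ Iic q, lam u ω ∂c.measure := by
        conv_lhs => rw [hsplit]
        exact setIntegral_union hdisj (hVmeas.diff measurableSet_Iic) hIntV1 hIntV2
      have h3 : ∫ u in V' ∩ Iic q, lam u ω ∂c.measure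
          ≤ ∫ u in U ∩ Ioc 0 q, lam u ω ∂c.measure := by
        refine setIntegral_mono_set hUqInt
          (Filter.Eventually.of_forall (fun u => h.hlam0 u ω))
          (Filter.Eventually.of_forall (fun x hx => ?_))
        exact ⟨hVU hx.1, (hVIoc hx.1).1, hx.2⟩
      have h4 : ∫ u in V' \ Iic q, lam u ω ∂c.measure
          ≤ ∫ u in Ioc q e, lam u ω ∂c.measure := by
        refine setIntegral_mono_set (hInt.mono_set (fun x hx => ⟨lt_of_le_of_lt hq0 hx.1, hx.2⟩))
          (Filter.Eventually.of_forall (fun u => h.hlam0 u ω))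
          (Filter.Eventually.of_forall (fun x hx => ?_))
        exact ⟨not_le.1 hx.2, (hVIoc hx.1).2⟩
      have h5 : ∫ u in Ioc q e, lam u ω ∂c.measure = gI c lam e ω - gI c lam q ω :=
        (gI_sub hq0 (le_of_lt hqe) hInt).symm
      have h6 : gI c lam e ω ≤ gI c lam q ω + ε := hcap e hei hInt
      linarith

lemma stInd_diff {s t : ℝ} (hst : s ≤ t) (ω : Ω) :
    stInd R t ω - stInd R s ω
      = Set.indicator {ω' | ENNReal.ofReal s < R ω' ∧ R ω' ≤ ENNReal.ofReal t}
          (fun _ => (1:ℝ)) ω := by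
  unfold stInd
  by_cases h1 : R ω ≤ ENNReal.ofReal s
  · have h2 : R ω ≤ ENNReal.ofReal t := le_trans h1 (ENNReal.ofReal_le_ofReal hst)
    rw [Set.indicator_of_mem (show ω ∈ {ω' | R ω' ≤ ENNReal.ofReal s} from h1),
      Set.indicator_of_mem (show ω ∈ {ω' | R ω' ≤ ENNReal.ofReal t} from h2),
      Set.indicator_of_notMem (show ω ∉ {ω' | ENNReal.ofReal s < R ω' ∧ R ω' ≤ ENNReal.ofReal t}
        from fun hc => absurd h1 (not_le.2 hc.1))]
    ring
  · rw [Set.indicator_of_notMem (show ω ∉ {ω' | R ω' ≤ ENNReal.ofReal s} from h1)]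
    by_cases h2 : R ω ≤ ENNReal.ofReal t
    · rw [Set.indicator_of_mem (show ω ∈ {ω' | R ω' ≤ ENNReal.ofReal t} from h2),
        Set.indicator_of_mem (show ω ∈ {ω' | ENNReal.ofReal s < R ω' ∧ R ω' ≤ ENNReal.ofReal t}
          from ⟨not_le.1 h1, h2⟩)]
      ring
    · rw [Set.indicator_of_notMem (show ω ∉ {ω' | R ω' ≤ ENNReal.ofReal t} from h2),
        Set.indicator_of_notMem (show ω ∉ {ω' | ENNReal.ofReal s < R ω' ∧ R ω' ≤ ENNReal.ofReal t}
          from fun hc => absurd hc.2 h2)]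
      ring

/-- the main expectation chain -/
lemma core_bound (h : MCtx P G R c lam) (U : Set ℝ) (b N : ℕ) {M : ℝ} :
    (P (⋃ l ∈ cellIdx U b N,
        {ω | ENNReal.ofReal (dyad N l) < R ω ∧ R ω ≤ ENNReal.ofReal (dyad N (l + 1))})).toReal
      ≤ (∫ ω, Ysum c lam U b N M ω ∂P) + (∫ ω in badSet c lam b M, gI c lam b ω ∂P)
        + (P (badSet c lam b M)).toReal := by
  classical
  set Λ := cellIdx U b N with hΛ
  set prev : ℕ → Set Ω :=
    fun l => {ω | ENNReal.ofReal (dyad N l) < R ω ∧ R ω ≤ ENNReal.ofReal (dyad N (l + 1))}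
    with hprev
  have hprevmeas : ∀ l, MeasurableSet (prev l) := by
    intro l
    have : prev l = R ⁻¹' (Ioc (ENNReal.ofReal (dyad N l)) (ENNReal.ofReal (dyad N (l + 1)))) := by
      ext ω; simp [hprev, Set.mem_Ioc]
    rw [this]
    exact h.hRmeas measurableSet_Ioc
  have hprevdisj : ∀ l l', l < l' → Disjoint (prev l) (prev l') := by
    intro l l' hll
    refine Set.disjoint_left.2 (fun ω hω hω' => ?_)
    have h1 : R ω ≤ ENNReal.ofReal (dyad N (l + 1)) := hω.2
    have h2 : ENNReal.ofReal (dyad N l') < R ω := hω'.1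
    have h3 : ENNReal.ofReal (dyad N (l + 1)) ≤ ENNReal.ofReal (dyad N l') :=
      ENNReal.ofReal_le_ofReal (dyad_mono N (by omega))
    exact absurd (lt_of_le_of_lt (le_trans h1 h3) h2) (lt_irrefl _)
  set Hb := Hset c lam b M (b : ℝ) with hHb
  set bs := badSet c lam b M with hbs
  -- step 0
  have step0 : P (⋃ l ∈ Λ, prev l) ≤ P bs + P (Hb ∩ ⋃ l ∈ Λ, prev l) := by
    refine le_trans (measure_mono (fun ω hω => ?_)) (measure_union_le _ _)
    by_cases hH : ω ∈ Hb
    · exact Or.inr ⟨hH, hω⟩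
    · left
      rw [hbs, ← Hset_b_compl (b := b) (M := M)]
      exact hH
  -- step 1
  have step1 : P (Hb ∩ ⋃ l ∈ Λ, prev l) = ∑ l ∈ Λ, P (Hb ∩ prev l) := by
    have e1 : Hb ∩ ⋃ l ∈ Λ, prev l = ⋃ l ∈ Λ, (Hb ∩ prev l) := by
      rw [Set.inter_iUnion₂]
    rw [e1]
    refine measure_biUnion_finset ?_ (fun l _ => (Hset_meas h).inter (hprevmeas l))
    intro l hl l' hl' hll
    rcases lt_or_gt_of_ne hll with hlt | hlt
    · exact Set.disjoint_of_subset Set.inter_subset_right Set.inter_subset_right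
        (hprevdisj l l' hlt)
    · exact Set.disjoint_of_subset Set.inter_subset_right Set.inter_subset_right
        (hprevdisj l' l hlt).symm
  -- per-cell estimates
  have hdb : ∀ {l : ℕ}, l ∈ Λ → dyad N (l + 1) ≤ (b : ℝ) := by
    intro l hl
    rw [hΛ, mem_cellIdx] at hl
    exact dyad_le_of_le hl.1
  have percell : ∀ l ∈ Λ, (P (Hb ∩ prev l)).toReal
      ≤ (∫ ω, (Hset c lam b M (dyad N (l + 1))).indicator
          (fun ω' => gI c lam (dyad N (l + 1)) ω' - gI c lam (dyad N l) ω') ω ∂P)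
        + ∫ ω in (Hset c lam b M (dyad N l)) \ (Hset c lam b M (dyad N (l + 1))),
            gI c lam (b:ℝ) ω ∂P := by
    intro l hl
    set s := dyad N l with hs
    set t := dyad N (l + 1) with ht
    have hst : s ≤ t := dyad_mono N (Nat.le_succ l)
    have hs0 : (0:ℝ) ≤ s := dyad_nonneg N l
    have ht0 : (0:ℝ) ≤ t := dyad_nonneg N (l + 1)
    have htb : t ≤ (b:ℝ) := hdb hl
    have hHsub : Hset c lam b M t ⊆ Hset c lam b M s := Hset_anti hst
    have hHbsub : Hb ⊆ Hset c lam b M s := Hset_anti (le_trans hst htb)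
    -- A: (P (Hb ∩ prev l)).toReal ≤ ∫_{H s} (stInd t - stInd s)
    have hA : (P (Hb ∩ prev l)).toReal ≤ ∫ ω in Hset c lam b M s, (stInd R t ω - stInd R s ω) ∂P := by
      have e1 : ∫ ω in Hset c lam b M s, (stInd R t ω - stInd R s ω) ∂P
          = ∫ ω in Hset c lam b M s, (prev l).indicator (fun _ => (1:ℝ)) ω ∂P := by
        refine setIntegral_congr_ae (Hset_meas h) (Filter.Eventually.of_forall (fun ω _ => ?_))
        exact stInd_diff hst ω
      have e2 : ∫ ω in Hset c lam b M s, (prev l).indicator (fun _ => (1:ℝ)) ω ∂P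
          = (P (Hset c lam b M s ∩ prev l)).toReal := by
        rw [setIntegral_indicator (hprevmeas l), setIntegral_const, smul_eq_mul, mul_one, measureReal_def]
      rw [e1, e2]
      refine ENNReal.toReal_mono (measure_ne_top _ _) (measure_mono ?_)
      exact Set.inter_subset_inter_left _ hHbsub
    -- B: key identity
    have hB : ∫ ω in Hset c lam b M s, (stInd R t ω - stInd R s ω) ∂P
        = (∫ ω in Hset c lam b M s, gI c lam t ω ∂P)
          - ∫ ω in Hset c lam b M s, gI c lam s ω ∂P := by
      rw [integral_sub ((stInd_int h t).integrableOn) ((stInd_int h s).integrableOn)]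
      exact (key h hs0 hst (Hset_measG h hs0)).symm
    -- C: split the H-set
    have hCsets : Hset c lam b M s = Hset c lam b M t ∪ (Hset c lam b M s \ Hset c lam b M t) :=
      (Set.union_diff_cancel hHsub).symm
    have hCint : ∀ u : ℝ, ∫ ω in Hset c lam b M s, gI c lam u ω ∂P
        = (∫ ω in Hset c lam b M t, gI c lam u ω ∂P)
          + ∫ ω in Hset c lam b M s \ Hset c lam b M t, gI c lam u ω ∂P := by
      intro u
      conv_lhs => rw [hCsets]
      exact setIntegral_union Set.disjoint_sdiff_right ((Hset_meas h).diff (Hset_meas h))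
        ((gI_int h u).integrableOn) ((gI_int h u).integrableOn)
    -- D: rare part
    have hrareG : MeasurableSet[G t] (Hset c lam b M s \ Hset c lam b M t) :=
      MeasurableSet.diff (h.hG.1 hst _ (Hset_measG h hs0)) (Hset_measG h ht0)
    have hD1 : 0 ≤ ∫ ω in Hset c lam b M s \ Hset c lam b M t, gI c lam s ω ∂P :=
      setIntegral_nonneg ((Hset_meas h).diff (Hset_meas h))
        (fun ω _ => gI_nonneg s ω h.hlam0)
    have hD2 : ∫ ω in Hset c lam b M s \ Hset c lam b M t, gI c lam t ω ∂P
        ≤ ∫ ω in Hset c lam b M s \ Hset c lam b M t, gI c lam (b:ℝ) ω ∂P :=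
      keyMono h ht0 htb hrareG
    -- E: the indicator form of the main part
    have hE : (∫ ω in Hset c lam b M t, gI c lam t ω ∂P)
        - ∫ ω in Hset c lam b M t, gI c lam s ω ∂P
        = ∫ ω, (Hset c lam b M t).indicator
            (fun ω' => gI c lam t ω' - gI c lam s ω') ω ∂P := by
      rw [integral_indicator (Hset_meas h)]
      rw [integral_sub ((gI_int h t).integrableOn) ((gI_int h s).integrableOn)]
    have hD1' : ∫ ω in Hset c lam b M t, gI c lam s ω ∂P
        ≤ ∫ ω in Hset c lam b M s, gI c lam s ω ∂P := by
      rw [hCint s]; linarith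
    linarith [hA, hB, hCint t, hCint s, hD1, hD2, hE]
  -- sum up rare parts
  set rare : ℕ → Set Ω :=
    fun l => (Hset c lam b M (dyad N l)) \ (Hset c lam b M (dyad N (l + 1))) with hrare
  have hraremeas : ∀ l, MeasurableSet (rare l) := fun l => (Hset_meas h).diff (Hset_meas h)
  have hraredisj : (Λ : Set ℕ).PairwiseDisjoint rare := by
    intro l hl l' hl' hll
    have key' : ∀ {a a' : ℕ}, a < a' → Disjoint (rare a) (rare a') := by
      intro a a' haa
      refine Set.disjoint_left.2 (fun ω hω hω' => ?_)
      have h1 : ω ∈ Hset c lam b M (dyad N a') := hω'.1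
      have h2 : ω ∈ Hset c lam b M (dyad N (a + 1)) :=
        Hset_anti (dyad_mono N (by omega)) h1
      exact hω.2 h2
    rcases lt_or_gt_of_ne hll with hlt | hlt
    · exact key' hlt
    · exact (key' hlt).symm
  have hraresub : ∀ l ∈ Λ, rare l ⊆ bs := by
    intro l hl ω hω
    have h1 : ω ∉ Hb := fun hc => hω.2 (Hset_anti (hdb hl) hc)
    rw [hbs, ← Hset_b_compl (b := b) (M := M)]
    exact h1
  have hraresum : ∑ l ∈ Λ, ∫ ω in rare l, gI c lam (b:ℝ) ω ∂P
      ≤ ∫ ω in bs, gI c lam (b:ℝ) ω ∂P := by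
    rw [← integral_biUnion_finset Λ (fun l _ => hraremeas l) hraredisj
      (fun l _ => (gI_int h (b:ℝ)).integrableOn)]
    refine setIntegral_mono_set ((gI_int h (b:ℝ)).integrableOn)
      (Filter.Eventually.of_forall (fun ω => gI_nonneg (b:ℝ) ω h.hlam0))
      (Filter.Eventually.of_forall ?_)
    exact Set.iUnion₂_subset hraresub
  -- final assembly
  have hYsum : ∫ ω, Ysum c lam U b N M ω ∂P
      = ∑ l ∈ Λ, ∫ ω, (Hset c lam b M (dyad N (l + 1))).indicator
          (fun ω' => gI c lam (dyad N (l + 1)) ω' - gI c lam (dyad N l) ω') ω ∂P := by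
    unfold Ysum
    exact integral_finset_sum _ (fun l _ =>
      (((gI_int h (dyad N (l+1))).sub (gI_int h (dyad N l))).indicator (Hset_meas h)))
  have hsum2 : (P (Hb ∩ ⋃ l ∈ Λ, prev l)).toReal = ∑ l ∈ Λ, (P (Hb ∩ prev l)).toReal := by
    rw [step1, ENNReal.toReal_sum (fun l _ => measure_ne_top _ _)]
  have hchain : (P (Hb ∩ ⋃ l ∈ Λ, prev l)).toReal
      ≤ (∫ ω, Ysum c lam U b N M ω ∂P) + ∫ ω in bs, gI c lam (b:ℝ) ω ∂P := by
    rw [hsum2, hYsum]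
    calc ∑ l ∈ Λ, (P (Hb ∩ prev l)).toReal
        ≤ ∑ l ∈ Λ, ((∫ ω, (Hset c lam b M (dyad N (l + 1))).indicator
            (fun ω' => gI c lam (dyad N (l + 1)) ω' - gI c lam (dyad N l) ω') ω ∂P)
          + ∫ ω in rare l, gI c lam (b:ℝ) ω ∂P) := Finset.sum_le_sum percell
      _ = (∑ l ∈ Λ, ∫ ω, (Hset c lam b M (dyad N (l + 1))).indicator
            (fun ω' => gI c lam (dyad N (l + 1)) ω' - gI c lam (dyad N l) ω') ω ∂P)
          + ∑ l ∈ Λ, ∫ ω in rare l, gI c lam (b:ℝ) ω ∂P := Finset.sum_add_distrib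
      _ ≤ _ := by
          have := hraresum
          linarith
  have hfinal : (P (⋃ l ∈ Λ, prev l)).toReal
      ≤ (P bs).toReal + (P (Hb ∩ ⋃ l ∈ Λ, prev l)).toReal := by
    refine le_trans (ENNReal.toReal_mono ?_ step0) ?_
    · exact ENNReal.add_ne_top.2 ⟨measure_ne_top _ _, measure_ne_top _ _⟩
    · rw [ENNReal.toReal_add (measure_ne_top _ _) (measure_ne_top _ _)]
  linarith

end MCtx


namespace MCtx
variable [m : MeasurableSpace Ω] {P : Measure Ω} [IsProbabilityMeasure P]
  {G : ℝ → MeasurableSpace Ω} {R : Ω → ℝ≥0∞} {c : StieltjesFunction ℝ} {lam : ℝ → Ω → ℝ}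
-- PART 6 : the main absolute continuity result
theorem main_ac (h : MCtx P G R c lam) (hR0 : P {ω | R ω = 0} = 0) :
    Measure.map (fun ω => (R ω).toReal) (P.restrict {ω | R ω < ⊤}) ≪ c.measure := by
  classical
  have hmeas : Measurable (fun ω => (R ω).toReal) := ENNReal.measurable_toReal.comp h.hRmeas
  have htopmeas : MeasurableSet {ω | R ω < ⊤} := h.hRmeas measurableSet_Iio
  set ν := Measure.map (fun ω => (R ω).toReal) (P.restrict {ω | R ω < ⊤}) with hν
  have hνap : ∀ V : Set ℝ, MeasurableSet V →
      ν V = P ((fun ω => (R ω).toReal) ⁻¹' V ∩ {ω | R ω < ⊤}) := by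
    intro V hV
    rw [hν, Measure.map_apply hmeas hV, Measure.restrict_apply (hmeas hV)]
  refine Measure.AbsolutelyContinuous.mk (fun A hA hA0 => ?_)
  -- main step : truncated pieces are null
  have hmain : ∀ b : ℕ, ν (A ∩ Ioc 0 (b:ℝ)) = 0 := by
    intro b
    set A' := A ∩ Ioc (0:ℝ) (b:ℝ) with hA'
    have hA'meas : MeasurableSet A' := hA.inter measurableSet_Ioc
    have hA'null : c.measure A' = 0 :=
      le_antisymm (le_trans (measure_mono Set.inter_subset_left) (le_of_eq hA0)) (zero_le)
    -- open covers
    have hopen : ∀ j : ℕ, ∃ U, A' ⊆ U ∧ IsOpen U ∧ c.measure U < (1/2 : ℝ≥0∞)^j := by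
      intro j
      have hlt : c.measure A' < (1/2 : ℝ≥0∞)^j := by
        rw [hA'null]
        exact ENNReal.pow_pos (by norm_num) j
      obtain ⟨U, hU1, hU2, hU3⟩ := Set.exists_isOpen_lt_of_lt A' _ hlt
      exact ⟨U, hU1, hU2, hU3⟩
    choose U0 hU0sub hU0open hU0lt using hopen
    set U : ℕ → Set ℝ := fun j => ⋂ k ∈ Finset.range (j+1), U0 k with hU
    have hUopen : ∀ j, IsOpen (U j) := fun j => isOpen_biInter_finset (fun k _ => hU0open k)
    have hUsub : ∀ j, A' ⊆ U j := fun j =>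
      Set.subset_iInter₂ (fun k _ => hU0sub k)
    have hUanti : Antitone U := by
      intro j j' hjj
      refine Set.iInter₂_mono' (fun k hk => ?_)
      exact ⟨k, Finset.mem_range.2 (lt_of_lt_of_le (Finset.mem_range.1 hk) (by omega)), le_rfl⟩
    have hUlt : ∀ j, c.measure (U j) < (1/2 : ℝ≥0∞)^j := fun j =>
      lt_of_le_of_lt (measure_mono (Set.biInter_subset_of_mem (Finset.self_mem_range_succ j)))
        (hU0lt j)
    have hKnull : c.measure (⋂ j, U j) = 0 := by
      have h1 : ∀ j, c.measure (⋂ j', U j') ≤ (1/2 : ℝ≥0∞)^j := fun j =>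
        le_trans (measure_mono (Set.iInter_subset _ j)) (le_of_lt (hUlt j))
      have h2 : Tendsto (fun j : ℕ => (1/2 : ℝ≥0∞)^j) atTop (𝓝 0) :=
        ENNReal.tendsto_pow_atTop_nhds_zero_of_lt_one (by norm_num)
      exact le_antisymm (ge_of_tendsto' h2 h1) (zero_le)
    -- identification of ν on cell unions
    have hprev : ∀ j N, ν (Wset (U j) b N)
        = P (⋃ l ∈ cellIdx (U j) b N,
            {ω | ENNReal.ofReal (dyad N l) < R ω ∧ R ω ≤ ENNReal.ofReal (dyad N (l + 1))}) := by
      intro j N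
      rw [hνap _ (Wset_measurable)]
      congr 1
      ext ω
      simp only [Wset, Set.mem_inter_iff, Set.mem_preimage, Set.mem_iUnion, Set.mem_setOf_eq]
      constructor
      · rintro ⟨⟨l, hl, hx⟩, htop⟩
        refine ⟨l, hl, ?_, ?_⟩
        · rw [ENNReal.ofReal_lt_iff_lt_toReal (dyad_nonneg N l) (ne_of_lt htop)]
          exact hx.1
        · rw [ENNReal.le_ofReal_iff_toReal_le (ne_of_lt htop) (dyad_nonneg N (l+1))]
          exact hx.2
      · rintro ⟨l, hl, h1, h2⟩
        have htop : R ω < ⊤ := lt_of_le_of_lt h2 ENNReal.ofReal_lt_top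
        refine ⟨⟨l, hl, ?_, ?_⟩, htop⟩
        · rw [← ENNReal.ofReal_lt_iff_lt_toReal (dyad_nonneg N l) (ne_of_lt htop)]
          exact h1
        · rw [← ENNReal.le_ofReal_iff_toReal_le (ne_of_lt htop) (dyad_nonneg N (l+1))]
          exact h2
    -- choice of levels
    have hlevel : ∀ j : ℕ, ∃ N, ν (U j ∩ Ioc 0 (b:ℝ)) ≤ ν (Wset (U j) b N) + (1/2 : ℝ≥0∞)^j := by
      intro j
      have htd : Tendsto (fun N => ν (Wset (U j) b N)) atTop (𝓝 (ν (U j ∩ Ioc 0 (b:ℝ)))) := by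
        have := tendsto_measure_iUnion_atTop (μ := ν) (Wset_mono (U := U j) (b := b))
        rwa [iUnion_Wset (hUopen j) b] at this
      by_cases hz : ν (U j ∩ Ioc 0 (b:ℝ)) = 0
      · exact ⟨0, by rw [hz]; exact zero_le⟩
      · have hlt : ν (U j ∩ Ioc 0 (b:ℝ)) - (1/2:ℝ≥0∞)^j < ν (U j ∩ Ioc 0 (b:ℝ)) := by
          refine ENNReal.sub_lt_self (measure_ne_top _ _) hz (pow_ne_zero j (by norm_num))
        obtain ⟨N, hN⟩ := (htd.eventually_const_lt hlt).exists
        exact ⟨N, by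
          rw [← tsub_le_iff_right]
          exact le_of_lt hN⟩
    choose Nj hNj using hlevel
    -- the key j-indexed objects, at exceedance level k+2
    set Mk : ℕ → ℝ := fun k => (k:ℝ) + 2 with hMk
    have hMk0 : ∀ k, (0:ℝ) ≤ Mk k := fun k => by positivity
    set Z : ℕ → ℕ → Ω → ℝ := fun k j ω => max (Ysum c lam (U j) b (Nj j) (Mk k) ω) 0 with hZ
    have hZint : ∀ k j, Integrable (Z k j) P := fun k j => (Ysum_int h _ _ _ _).pos_part
    have hZnonneg : ∀ k j ω, 0 ≤ Z k j ω := fun k j ω => le_max_right _ _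
    -- a.e. tendsto of Z to 0
    have hZtend : ∀ k, ∀ᵐ ω ∂P, Tendsto (fun j => Z k j ω) atTop (𝓝 0) := by
      intro k
      have hnull : P (⋂ k' : ℕ, badSet c lam b ((k':ℝ) + 2)) = 0 := badSet_inter_null h b
      have hae : ∀ᵐ ω ∂P, ω ∉ ⋂ k' : ℕ, badSet c lam b ((k':ℝ) + 2) := by
        rw [ae_iff]
        have he : {ω | ¬ ω ∉ ⋂ k' : ℕ, badSet c lam b ((k':ℝ) + 2)}
            = ⋂ k' : ℕ, badSet c lam b ((k':ℝ) + 2) := by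
          ext ω; simp
        rw [he]
        exact hnull
      filter_upwards [hae] with ω hω
      obtain ⟨k₀, hk₀⟩ : ∃ k₀ : ℕ, ω ∉ badSet c lam b ((k₀:ℝ) + 2) := by
        by_contra hcon
        push_neg at hcon
        exact hω (Set.mem_iInter.2 hcon)
      have hbdd : ∀ i, gI c lam (qseq b i) ω ≤ (k₀:ℝ) + 2 := by
        intro i
        by_contra hcon
        exact hk₀ (Set.mem_iUnion.2 ⟨i, not_le.1 hcon⟩)
      rw [Metric.tendsto_atTop]
      intro ε hε
      -- choose a near-maximal honest dyadic time q
      set Sv : Set ℝ := insert 0 (Set.range (fun i => gI c lam (qseq b i) ω)) with hSv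
      have hSne : Sv.Nonempty := ⟨0, Set.mem_insert _ _⟩
      have hSbdd : BddAbove Sv := by
        refine ⟨max ((k₀:ℝ) + 2) 0, fun y hy => ?_⟩
        rcases Set.mem_insert_iff.1 hy with rfl | ⟨i, rfl⟩
        · exact le_max_right _ _
        · exact le_trans (hbdd i) (le_max_left _ _)
      have hvle : ∀ i, gI c lam (qseq b i) ω ≤ sSup Sv := fun i =>
        le_csSup hSbdd (Set.mem_insert_of_mem _ ⟨i, rfl⟩)
      have hg00 : gI c lam 0 ω = 0 := by
        unfold gI
        rw [Set.Ioc_self]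
        simp
      obtain ⟨q, hq0, hqInt, hqs⟩ : ∃ q, 0 ≤ q ∧
          IntegrableOn (fun u => lam u ω) (Ioc 0 q) c.measure ∧
          sSup Sv ≤ gI c lam q ω + ε / 2 := by
        obtain ⟨y, hySv, hy⟩ := exists_lt_of_lt_csSup hSne
          (show sSup Sv - ε / 2 < sSup Sv by linarith)
        have hzerocase : (y:ℝ) ≤ 0 → ∃ q, 0 ≤ q ∧
            IntegrableOn (fun u => lam u ω) (Ioc 0 q) c.measure ∧
            sSup Sv ≤ gI c lam q ω + ε / 2 := by
          intro hy0
          refine ⟨0, le_rfl, ?_, ?_⟩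
          · rw [Set.Ioc_self]
            exact integrableOn_empty
          · rw [hg00]
            linarith
        rcases Set.mem_insert_iff.1 hySv with rfl | ⟨i₀, rfl⟩
        · exact hzerocase le_rfl
        · by_cases hint0 : IntegrableOn (fun u => lam u ω) (Ioc 0 (qseq b i₀)) c.measure
          · exact ⟨qseq b i₀, qseq_nonneg b i₀, hint0, by linarith⟩
          · refine hzerocase ?_
            show gI c lam (qseq b i₀) ω ≤ 0
            rw [gI_junk hint0]
      have hcap : ∀ t, (∃ i, qseq b i = t) →
          IntegrableOn (fun u => lam u ω) (Ioc 0 t) c.measure →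
          gI c lam t ω ≤ gI c lam q ω + ε / 2 := by
        rintro t ⟨i, rfl⟩ _
        exact le_trans (hvle i) hqs
      -- dominated convergence in the time variable
      set f : ℝ → ℝ := fun u => lam u ω with hf
      have hITmeas : MeasurableSet (⋂ j', U j') :=
        MeasurableSet.iInter (fun j' => (hUopen j').measurableSet)
      have hsdct : Tendsto (fun j => ∫ u in (U j) ∩ Ioc 0 q, f u ∂c.measure) atTop (𝓝 0) := by
        have hdom := tendsto_integral_of_dominated_convergence
          (μ := c.measure.restrict (Ioc 0 q))
          (F := fun j u => (U j).indicator f u) (f := fun u => (⋂ j', U j').indicator f u)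
          (bound := fun u => |f u|)
          (fun j => hqInt.aestronglyMeasurable.indicator (hUopen j).measurableSet)
          hqInt.abs
          (fun j => Filter.Eventually.of_forall (fun u => by
            calc ‖(U j).indicator f u‖ ≤ ‖f u‖ := norm_indicator_le_norm_self f u
            _ = |f u| := Real.norm_eq_abs (f u)))
          (Filter.Eventually.of_forall (fun u => by
            show Tendsto (fun j => (U j).indicator f u) atTop (𝓝 ((⋂ j', U j').indicator f u))
            by_cases hu : u ∈ ⋂ j', U j'
            · have he : ∀ j, (U j).indicator f u = (⋂ j', U j').indicator f u := by
                intro j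
                rw [Set.indicator_of_mem (Set.mem_iInter.1 hu j),
                  Set.indicator_of_mem hu]
              exact Tendsto.congr (fun j => (he j).symm) tendsto_const_nhds
            · obtain ⟨j₀, hj₀⟩ : ∃ j₀, u ∉ U j₀ := by
                by_contra hcon
                push_neg at hcon
                exact hu (Set.mem_iInter.2 hcon)
              rw [Set.indicator_of_notMem hu]
              refine Tendsto.congr' ?_ tendsto_const_nhds
              rw [Filter.EventuallyEq, eventually_atTop]
              exact ⟨j₀, fun j hj =>
                (Set.indicator_of_notMem (fun hc => hj₀ (hUanti hj hc)) f).symm⟩))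
        have he2 : ∫ u, (⋂ j', U j').indicator f u ∂(c.measure.restrict (Ioc 0 q)) = 0 := by
          rw [integral_indicator hITmeas, Measure.restrict_restrict hITmeas,
            Measure.restrict_eq_zero.mpr, integral_zero_measure]
          refine le_antisymm (le_trans (measure_mono Set.inter_subset_left) ?_) (zero_le)
          exact le_of_eq hKnull
        rw [he2] at hdom
        refine Tendsto.congr (fun j => ?_) hdom
        rw [integral_indicator (hUopen j).measurableSet,
          Measure.restrict_restrict (hUopen j).measurableSet]
      obtain ⟨J, hJ⟩ := (Metric.tendsto_atTop.1 hsdct) (ε / 2) (by positivity)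
      refine ⟨J, fun j hj => ?_⟩
      have h1 : Ysum c lam (U j) b (Nj j) (Mk k) ω
          ≤ (∫ u in (U j) ∩ Ioc 0 q, f u ∂c.measure) + ε / 2 :=
        Ysum_tail h (U j) (hUopen j).measurableSet b (Nj j) (by positivity) hq0 ω hqInt hcap
      have h2 : ∫ u in (U j) ∩ Ioc 0 q, f u ∂c.measure < ε / 2 := by
        have := hJ j hj
        rw [Real.dist_eq, sub_zero] at this
        exact lt_of_le_of_lt (le_abs_self _) this
      have h3 : 0 ≤ ∫ u in (U j) ∩ Ioc 0 q, f u ∂c.measure :=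
        integral_nonneg (fun u => h.hlam0 u ω)
      rw [Real.dist_eq, sub_zero, abs_of_nonneg (hZnonneg k j ω)]
      have h4 : Z k j ω ≤ (∫ u in (U j) ∩ Ioc 0 q, f u ∂c.measure) + ε / 2 :=
        max_le h1 (by linarith)
      linarith
    -- the per (k,j) inequality
    have hineq : ∀ k j, ν A' ≤ ENNReal.ofReal (∫ ω, Z k j ω ∂P)
        + ENNReal.ofReal (∫ ω in badSet c lam b (Mk k), gI c lam (b:ℝ) ω ∂P)
        + P (badSet c lam b (Mk k)) + (1/2 : ℝ≥0∞)^j := by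
      intro k j
      have h1 : ν A' ≤ ν (U j ∩ Ioc 0 (b:ℝ)) :=
        measure_mono (Set.subset_inter (hUsub j) Set.inter_subset_right)
      have h4 := core_bound h (U j) b (Nj j) (M := Mk k)
      have h5 : ∫ ω, Ysum c lam (U j) b (Nj j) (Mk k) ω ∂P ≤ ∫ ω, Z k j ω ∂P :=
        integral_mono (Ysum_int h _ _ _ _) (hZint k j) (fun ω => le_max_left _ _)
      have hZpos : 0 ≤ ∫ ω, Z k j ω ∂P := integral_nonneg (fun ω => hZnonneg k j ω)
      have hbadpos : 0 ≤ ∫ ω in badSet c lam b (Mk k), gI c lam (b:ℝ) ω ∂P :=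
        setIntegral_nonneg (badSet_meas h) (fun ω _ => gI_nonneg _ ω h.hlam0)
      set PS := P (⋃ l ∈ cellIdx (U j) b (Nj j),
        {ω | ENNReal.ofReal (dyad (Nj j) l) < R ω ∧
          R ω ≤ ENNReal.ofReal (dyad (Nj j) (l + 1))}) with hPS
      have h6 : PS ≤ ENNReal.ofReal (∫ ω, Z k j ω ∂P)
          + ENNReal.ofReal (∫ ω in badSet c lam b (Mk k), gI c lam (b:ℝ) ω ∂P)
          + P (badSet c lam b (Mk k)) := by
        have h7 : PS.toReal ≤ (∫ ω, Z k j ω ∂P)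
            + (∫ ω in badSet c lam b (Mk k), gI c lam (b:ℝ) ω ∂P)
            + (P (badSet c lam b (Mk k))).toReal := by linarith
        calc PS = ENNReal.ofReal PS.toReal := (ENNReal.ofReal_toReal (measure_ne_top _ _)).symm
          _ ≤ ENNReal.ofReal ((∫ ω, Z k j ω ∂P)
              + (∫ ω in badSet c lam b (Mk k), gI c lam (b:ℝ) ω ∂P)
              + (P (badSet c lam b (Mk k))).toReal) := ENNReal.ofReal_le_ofReal h7
          _ = _ := by
              rw [ENNReal.ofReal_add (by linarith) ENNReal.toReal_nonneg,
                ENNReal.ofReal_add hZpos hbadpos,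
                ENNReal.ofReal_toReal (measure_ne_top _ _)]
      calc ν A' ≤ ν (U j ∩ Ioc 0 (b:ℝ)) := h1
        _ ≤ ν (Wset (U j) b (Nj j)) + (1/2 : ℝ≥0∞)^j := hNj j
        _ = PS + (1/2 : ℝ≥0∞)^j := by rw [hprev j (Nj j)]
        _ ≤ _ := add_le_add_left h6 _
    -- limit in j
    have hjlim : ∀ k, ν A' ≤ ENNReal.ofReal
        (∫ ω in badSet c lam b (Mk k), gI c lam (b:ℝ) ω ∂P) + P (badSet c lam b (Mk k)) := by
      intro k
      have hZi0 : Tendsto (fun j => ∫ ω, Z k j ω ∂P) atTop (𝓝 0) := by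
        have hz := tendsto_integral_of_dominated_convergence (μ := P)
          (F := Z k) (f := fun _ => (0:ℝ)) (bound := fun _ => Mk k)
          (fun j => (hZint k j).aestronglyMeasurable) (integrable_const _)
          (fun j => Filter.Eventually.of_forall (fun ω => by
            rw [Real.norm_eq_abs, abs_of_nonneg (hZnonneg k j ω)]
            exact max_le (Ysum_le h _ _ _ (hMk0 k) ω) (hMk0 k)))
          (hZtend k)
        simpa using hz
      have htendall : Tendsto (fun j => ENNReal.ofReal (∫ ω, Z k j ω ∂P)
          + ENNReal.ofReal (∫ ω in badSet c lam b (Mk k), gI c lam (b:ℝ) ω ∂P)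
          + P (badSet c lam b (Mk k)) + (1/2 : ℝ≥0∞)^j) atTop
          (𝓝 (0 + ENNReal.ofReal (∫ ω in badSet c lam b (Mk k), gI c lam (b:ℝ) ω ∂P)
            + P (badSet c lam b (Mk k)) + 0)) := by
        refine Tendsto.add (Tendsto.add (Tendsto.add ?_ tendsto_const_nhds)
          tendsto_const_nhds) ?_
        · have := ENNReal.tendsto_ofReal hZi0
          simpa using this
        · exact ENNReal.tendsto_pow_atTop_nhds_zero_of_lt_one (by norm_num)
      have := ge_of_tendsto' htendall (fun j => hineq k j)
      simpa using this
    -- limit in k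
    have hbadtend : Tendsto (fun k => P (badSet c lam b (Mk k))) atTop (𝓝 0) := by
      have h2 := MeasureTheory.tendsto_measure_iInter_atTop
        (μ := P) (s := fun k : ℕ => badSet c lam b (Mk k))
        (fun k => (badSet_meas h).nullMeasurableSet)
        (fun k k' hkk => badSet_anti (by
          rw [hMk]
          push_cast
          have : (k:ℝ) ≤ (k':ℝ) := Nat.cast_le.2 hkk
          linarith))
        ⟨0, measure_ne_top _ _⟩
      rw [show (⋂ k : ℕ, badSet c lam b (Mk k)) = ⋂ k : ℕ, badSet c lam b ((k:ℝ) + 2) from rfl,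
        badSet_inter_null h b] at h2
      exact h2
    have hbetatend : Tendsto (fun k => ∫ ω in badSet c lam b (Mk k), gI c lam (b:ℝ) ω ∂P)
        atTop (𝓝 0) := by
      have hnull : P (⋂ k' : ℕ, badSet c lam b ((k':ℝ) + 2)) = 0 := badSet_inter_null h b
      have hITm : MeasurableSet (⋂ k' : ℕ, badSet c lam b ((k':ℝ) + 2)) :=
        MeasurableSet.iInter (fun k' => badSet_meas h)
      have hdom := tendsto_integral_of_dominated_convergence (μ := P)
        (F := fun k ω => (badSet c lam b (Mk k)).indicator (gI c lam (b:ℝ)) ω)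
        (f := fun ω => (⋂ k' : ℕ, badSet c lam b ((k':ℝ) + 2)).indicator (gI c lam (b:ℝ)) ω)
        (bound := fun ω => |gI c lam (b:ℝ) ω|)
        (fun k => ((gI_int h (b:ℝ)).indicator (badSet_meas h)).aestronglyMeasurable)
        ((gI_int h (b:ℝ)).abs)
        (fun k => Filter.Eventually.of_forall (fun ω => by
          calc ‖(badSet c lam b (Mk k)).indicator (gI c lam (b:ℝ)) ω‖
              ≤ ‖gI c lam (b:ℝ) ω‖ := norm_indicator_le_norm_self _ ω
          _ = |gI c lam (b:ℝ) ω| := Real.norm_eq_abs _))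
        (Filter.Eventually.of_forall (fun ω => by
          show Tendsto (fun k => (badSet c lam b (Mk k)).indicator (gI c lam (b:ℝ)) ω) atTop
            (𝓝 ((⋂ k' : ℕ, badSet c lam b ((k':ℝ) + 2)).indicator (gI c lam (b:ℝ)) ω))
          by_cases hω : ω ∈ ⋂ k' : ℕ, badSet c lam b ((k':ℝ) + 2)
          · have he : ∀ k : ℕ, (badSet c lam b (Mk k)).indicator (gI c lam (b:ℝ)) ω
                = (⋂ k' : ℕ, badSet c lam b ((k':ℝ) + 2)).indicator (gI c lam (b:ℝ)) ω := by
              intro k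
              rw [Set.indicator_of_mem (Set.mem_iInter.1 hω k), Set.indicator_of_mem hω]
            exact Tendsto.congr (fun k => (he k).symm) tendsto_const_nhds
          · obtain ⟨k₀, hk₀⟩ : ∃ k₀ : ℕ, ω ∉ badSet c lam b ((k₀:ℝ) + 2) := by
              by_contra hcon
              push_neg at hcon
              exact hω (Set.mem_iInter.2 hcon)
            rw [Set.indicator_of_notMem hω]
            refine Tendsto.congr' ?_ tendsto_const_nhds
            rw [Filter.EventuallyEq, eventually_atTop]
            refine ⟨k₀, fun k hk => (Set.indicator_of_notMem (fun hc => ?_) _).symm⟩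
            refine hk₀ (badSet_anti ?_ hc)
            rw [hMk]
            push_cast
            have : (k₀:ℝ) ≤ (k:ℝ) := Nat.cast_le.2 hk
            linarith))
      have he2 : ∫ ω, (⋂ k' : ℕ, badSet c lam b ((k':ℝ) + 2)).indicator (gI c lam (b:ℝ)) ω ∂P
          = 0 := by
        rw [integral_indicator hITm, Measure.restrict_eq_zero.mpr hnull, integral_zero_measure]
      rw [he2] at hdom
      refine Tendsto.congr (fun k => ?_) hdom
      rw [integral_indicator (badSet_meas h)]
    have hklim : Tendsto (fun k => ENNReal.ofReal
        (∫ ω in badSet c lam b (Mk k), gI c lam (b:ℝ) ω ∂P) + P (badSet c lam b (Mk k)))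
        atTop (𝓝 0) := by
      have h1 := (ENNReal.tendsto_ofReal hbetatend).add hbadtend
      simpa using h1
    exact le_antisymm (ge_of_tendsto' hklim hjlim) (zero_le)
  -- assembling
  have hneg : ν (A ∩ Iic 0) = 0 := by
    have h1 : ν (A ∩ Iic 0) ≤ P {ω | R ω = 0} := by
      rw [hνap _ (hA.inter measurableSet_Iic)]
      refine measure_mono (fun ω hω => ?_)
      have h2 : (R ω).toReal ≤ 0 := hω.1.2
      have h3 : (R ω).toReal = 0 := le_antisymm h2 ENNReal.toReal_nonneg
      have h4 : R ω < ⊤ := hω.2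
      rw [Set.mem_setOf_eq]
      rw [ENNReal.toReal_eq_zero_iff] at h3
      rcases h3 with h3 | h3
      · exact h3
      · exact absurd h3 (ne_of_lt h4)
    rw [hR0] at h1
    exact le_antisymm h1 (zero_le)
  have hcover : A ⊆ (A ∩ Iic 0) ∪ ⋃ b : ℕ, (A ∩ Ioc 0 (b:ℝ)) := by
    intro x hx
    rcases le_or_gt x 0 with hx0 | hx0
    · exact Or.inl ⟨hx, hx0⟩
    · refine Or.inr (Set.mem_iUnion.2 ⟨⌈x⌉₊, hx, hx0, Nat.le_ceil x⟩)
  refine le_antisymm ?_ (zero_le)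
  calc ν A ≤ ν ((A ∩ Iic 0) ∪ ⋃ b : ℕ, (A ∩ Ioc 0 (b:ℝ))) := measure_mono hcover
    _ ≤ ν (A ∩ Iic 0) + ν (⋃ b : ℕ, (A ∩ Ioc 0 (b:ℝ))) := measure_union_le _ _
    _ ≤ 0 + ∑' b : ℕ, ν (A ∩ Ioc 0 (b:ℝ)) := by
        rw [hneg]
        exact add_le_add le_rfl (measure_iUnion_le _)
    _ = 0 := by simp [hmain]

end MCtx


/-- Corollary 2.6. If `R` is an `ℍ`-stopping time that is totally
inaccessible in a subfiltration `𝔾` with `𝔾`-compensator `∫_0^t λ_s dc(s)` (`c` deterministic,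
continuous, nondecreasing), then the law `F` of `R` satisfies `dF ≪ dc`; in particular if
`dc` is Lebesgue measure then `F` is absolutely continuous, and if `dc ⟂ Leb` then `F ⟂ Leb`. -/
theorem stmt2 [m : MeasurableSpace Ω] (P : Measure Ω) [IsProbabilityMeasure P]
    (H G : ℝ → MeasurableSpace Ω) (hH : IsFiltrationFam H) (hG : IsFiltrationFam G)
    (hGH : ∀ t, G t ≤ H t)
    (R : Ω → ℝ≥0∞) (hRmeas : Measurable R) (hRH : IsStoppingTimeE H R)
    (hti : IsTotallyInaccessible P G R)
    (c : StieltjesFunction ℝ) (hc : Continuous c)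
    (lam : ℝ → Ω → ℝ) (hlam0 : ∀ s ω, 0 ≤ lam s ω) (hlamAd : AdaptedFam G lam)
    (hcomp : IsMartingaleFam P G
      (fun t ω => stInd R t ω - ∫ s in Ioc (0:ℝ) t, lam s ω ∂c.measure)) :
    Measure.map (fun ω => (R ω).toReal) (P.restrict {ω | R ω < ⊤}) ≪ c.measure ∧
    (c.measure = (volume : Measure ℝ) →
      Measure.map (fun ω => (R ω).toReal) (P.restrict {ω | R ω < ⊤}) ≪ (volume : Measure ℝ)) ∧
    (c.measure ⟂ₘ (volume : Measure ℝ) →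
      Measure.map (fun ω => (R ω).toReal) (P.restrict {ω | R ω < ⊤}) ⟂ₘ (volume : Measure ℝ)) := by
  have hctx : MCtx P G R c lam :=
    ⟨hG, hRmeas, hti.1, hlam0, hcomp⟩
  have hR0 : P {ω | R ω = 0} = 0 := by
    have hpred : IsPredictableST G (fun _ => (0 : ℝ≥0∞)) := by
      refine ⟨fun t => ?_, ⟨fun _ _ => 0, fun n t => ?_, fun ω => ?_⟩⟩
      · have he : {ω : Ω | (0:ℝ≥0∞) ≤ ENNReal.ofReal t} = Set.univ := by
          ext ω; simp
        rw [he]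
        exact MeasurableSet.univ
      · have he : {ω : Ω | (0:ℝ≥0∞) ≤ ENNReal.ofReal t} = Set.univ := by
          ext ω; simp
        rw [he]
        exact MeasurableSet.univ
      · exact ⟨monotone_const, tendsto_const_nhds, fun n h0 => absurd h0 (lt_irrefl 0)⟩
    have h0 := hti.2 _ hpred
    have he : {ω | R ω = 0} = {ω | R ω = (fun _ => (0:ℝ≥0∞)) ω ∧ R ω < ⊤} := by
      ext ω
      constructor
      · intro hω
        exact ⟨hω, by rw [Set.mem_setOf_eq] at hω; rw [hω]; exact ENNReal.zero_lt_top⟩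
      · intro hω
        exact hω.1
    rw [he]
    exact h0
  have hac := MCtx.main_ac hctx hR0
  exact ⟨hac, fun hceq => hceq ▸ hac,
    fun hsing => hsing.mono_ac hac Measure.AbsolutelyContinuous.rfl⟩
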